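/- For all integers a, d, c, the matrix H satisfies H² = I, H R H = R⁻¹, and H T⁻¹ H = T, where I is the 6×6 identity matrix (so conjugation by the involution H inverts both R and T). -/
import Mathlib


open Matrix

/-- The matrix `U` depending on the integers `a`, `d`, `c`. -/
def Umat (a d c : ℤ) : Matrix (Fin 6) (Fin 6) ℤ :=
  !![1,1,0,0,0,0; 0,1,1,0,0,0; 0,0,1,0,0,0; -a,-a,0,1,0,0; 0,d,d,-1,1,0; 0,0,-c,1,-1,1]

/-- The matrix `T`: the identity with an extra `1` in position `(3,6)` (i.e. row 3, column 6). -/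
def Tmat : Matrix (Fin 6) (Fin 6) ℤ :=
  !![1,0,0,0,0,0; 0,1,0,0,0,0; 0,0,1,0,0,1; 0,0,0,1,0,0; 0,0,0,0,1,0; 0,0,0,0,0,1]

/-- The involutive matrix `H` (depending on `d`). -/
def Hmat (d : ℤ) : Matrix (Fin 6) (Fin 6) ℤ :=
  !![1,1,0,0,0,0; 0,-1,0,0,0,0; 0,0,1,0,0,-1; 0,0,0,-1,0,0; 0,-d,0,-1,1,0; 0,0,0,0,0,-1]

private lemma cons_val_five' {α : Type*} {m : ℕ} (x : α) (u : Fin (m+5) → α) :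
    Matrix.vecCons x u 5 =
      Matrix.vecHead (Matrix.vecTail (Matrix.vecTail (Matrix.vecTail (Matrix.vecTail u)))) :=
  rfl

private def Rx (a d c : ℤ) : Matrix (Fin 6) (Fin 6) ℤ :=
  !![1,1,0,0,0,0; 0,1,1,0,0,0; 0,0,1-c,1,-1,1; -a,-a,0,1,0,0; 0,d,d,-1,1,0; 0,0,-c,1,-1,1]

private def HRx (a d c : ℤ) : Matrix (Fin 6) (Fin 6) ℤ :=
  !![1,2,1,0,0,0; 0,-1,-1,0,0,0; 0,0,1,0,0,0; a,a,0,-1,0,0; a,a,0,-2,1,0; 0,0,c,-1,1,-1]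

private def HRHx (a d c : ℤ) : Matrix (Fin 6) (Fin 6) ℤ :=
  !![1,-1,1,0,0,-1; 0,1,-1,0,0,1; 0,0,1,0,0,-1; a,0,0,1,0,0; a,-d,0,1,1,0; 0,-d,c,0,1,1-c]

private def Tinv : Matrix (Fin 6) (Fin 6) ℤ :=
  !![1,0,0,0,0,0; 0,1,0,0,0,0; 0,0,1,0,0,-1; 0,0,0,1,0,0; 0,0,0,0,1,0; 0,0,0,0,0,1]

set_option maxHeartbeats 1600000 in
private lemma hR (a d c : ℤ) : Tmat * Umat a d c = Rx a d c := by
  ext i j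
  fin_cases i <;> fin_cases j <;>
    simp [Matrix.mul_apply, Fin.sum_univ_six, Tmat, Umat, Rx,
      Matrix.cons_val_two, Matrix.cons_val_three, Matrix.cons_val_four, cons_val_five',
      Matrix.vecHead, Matrix.vecTail] <;> ring

set_option maxHeartbeats 1600000 in
private lemma hHR (a d c : ℤ) : Hmat d * Rx a d c = HRx a d c := by
  ext i j
  fin_cases i <;> fin_cases j <;>
    simp [Matrix.mul_apply, Fin.sum_univ_six, Hmat, Rx, HRx,
      Matrix.cons_val_two, Matrix.cons_val_three, Matrix.cons_val_four, cons_val_five',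
      Matrix.vecHead, Matrix.vecTail] <;> ring

set_option maxHeartbeats 1600000 in
private lemma hHRH (a d c : ℤ) : HRx a d c * Hmat d = HRHx a d c := by
  ext i j
  fin_cases i <;> fin_cases j <;>
    simp [Matrix.mul_apply, Fin.sum_univ_six, Hmat, HRx, HRHx,
      Matrix.cons_val_two, Matrix.cons_val_three, Matrix.cons_val_four, cons_val_five',
      Matrix.vecHead, Matrix.vecTail] <;> ring

set_option maxHeartbeats 1600000 in
private lemma hRinv (a d c : ℤ) : Rx a d c * HRHx a d c = 1 := by
  ext i j
  fin_cases i <;> fin_cases j <;>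
    simp [Matrix.mul_apply, Fin.sum_univ_six, Rx, HRHx, Matrix.one_apply,
      Matrix.cons_val_two, Matrix.cons_val_three, Matrix.cons_val_four, cons_val_five',
      Matrix.vecHead, Matrix.vecTail] <;> ring

set_option maxHeartbeats 1600000 in
private lemma hHsq (d : ℤ) : Hmat d * Hmat d = 1 := by
  ext i j
  fin_cases i <;> fin_cases j <;>
    simp [Matrix.mul_apply, Fin.sum_univ_six, Hmat, Matrix.one_apply,
      Matrix.cons_val_two, Matrix.cons_val_three, Matrix.cons_val_four, cons_val_five',
      Matrix.vecHead, Matrix.vecTail] <;> ring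

set_option maxHeartbeats 1600000 in
private lemma hTTinv : Tmat * Tinv = 1 := by
  ext i j
  fin_cases i <;> fin_cases j <;>
    simp [Matrix.mul_apply, Fin.sum_univ_six, Tmat, Tinv, Matrix.one_apply,
      Matrix.cons_val_two, Matrix.cons_val_three, Matrix.cons_val_four, cons_val_five',
      Matrix.vecHead, Matrix.vecTail]

set_option maxHeartbeats 1600000 in
private lemma hHTinvH (d : ℤ) : Hmat d * Tinv * Hmat d = Tmat := by
  have h1 : Hmat d * Tinv =
      !![1,1,0,0,0,0; 0,-1,0,0,0,0; 0,0,1,0,0,-2; 0,0,0,-1,0,0; 0,-d,0,-1,1,0; 0,0,0,0,0,-1] := by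
    ext i j
    fin_cases i <;> fin_cases j <;>
      simp [Matrix.mul_apply, Fin.sum_univ_six, Hmat, Tinv,
        Matrix.cons_val_two, Matrix.cons_val_three, Matrix.cons_val_four, cons_val_five',
        Matrix.vecHead, Matrix.vecTail] <;> ring
  rw [h1]
  ext i j
  fin_cases i <;> fin_cases j <;>
    simp [Matrix.mul_apply, Fin.sum_univ_six, Hmat, Tmat,
      Matrix.cons_val_two, Matrix.cons_val_three, Matrix.cons_val_four, cons_val_five',
      Matrix.vecHead, Matrix.vecTail] <;> ring

/-- For all integers `a, d, c`, with `R = T·U`: `H² = I`, `H R H = R⁻¹` and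
`H T⁻¹ H = T`; so conjugation by the involution `H` inverts both `R` and `T`. -/
theorem H_inverts_R_and_T (a d c : ℤ) :
    Hmat d ^ 2 = 1 ∧
    Hmat d * (Tmat * Umat a d c) * Hmat d = (Tmat * Umat a d c)⁻¹ ∧
    Hmat d * Tmat⁻¹ * Hmat d = Tmat := by
  refine ⟨by rw [pow_two]; exact hHsq d, ?_, ?_⟩
  · rw [hR, hHR, hHRH, inv_eq_right_inv (hRinv a d c)]
  · rw [inv_eq_right_inv hTTinv]; exact hHTinvH d
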